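/- arXiv:1507.02193 — 3 statements merged into one kernel-verified Lean document; each statement's English description precedes it below -/
import Mathlib

section
/- For real p > 0, M > 0, μ > 0 and nonnegative integer k, the integral ∫₀^p e^{-Mτ²} τ^{2k+1} (p² - τ²)^{μ-1} dτ equals (p^{2k+2μ} · k! · Γ(μ) / (2 Γ(k+μ+1))) · ₁F₁(k+1; k+μ+1; -Mp²), where ₁F₁ is the confluent hypergeometric function. -/
open MeasureTheory Real

/-- The confluent hypergeometric function `₁F₁(a; b; z) = ∑_{r≥0} (a)_r z^r / ((b)_r r!)`,
where `(a)_r = Γ(a+r)/Γ(a)` is the Pochhammer symbol. -/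
noncomputable def oneFOne (a b z : ℝ) : ℝ :=
  ∑' r : ℕ, (Real.Gamma (a + r) / Real.Gamma a) * z ^ r /
    ((Real.Gamma (b + r) / Real.Gamma b) * r.factorial)

open Set

lemma ii_lin (q μ : ℝ) (hμ : 0 < μ) :
    IntervalIntegrable (fun u => (q - u) ^ (μ - 1)) volume 0 q := by
  have h := (intervalIntegral.intervalIntegrable_rpow' (a := 0) (b := q)
    (r := μ - 1) (by linarith)).comp_sub_left q
  simpa using h.symm


lemma ii_quad (p μ : ℝ) (hp : 0 < p) (hμ : 0 < μ) (c : ℝ → ℝ)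
    (hc : ContinuousOn c (Set.uIcc 0 p)) :
    IntervalIntegrable (fun τ => c τ * (p ^ 2 - τ ^ 2) ^ (μ - 1)) volume 0 p := by
  have hcont : ContinuousOn (fun τ => c τ * (p + τ) ^ (μ - 1)) (Set.uIcc 0 p) := by
    apply hc.mul
    apply (continuousOn_const.add continuousOn_id).rpow_const
    intro x hx
    rw [Set.uIcc_of_le hp.le] at hx
    left
    simp only [Pi.add_apply, id]
    nlinarith [hx.1]
  have h := (ii_lin p μ hμ).continuousOn_mul hcont
  rw [intervalIntegrable_iff] at h ⊢
  apply h.congr_fun ?_ measurableSet_uIoc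
  intro τ hτ
  rw [Set.uIoc_of_le hp.le] at hτ
  have h1 : (0:ℝ) ≤ p + τ := by linarith [hτ.1]
  have h2 : (0:ℝ) ≤ p - τ := by linarith [hτ.2]
  have h3 : p ^ 2 - τ ^ 2 = (p + τ) * (p - τ) := by ring
  simp only []
  rw [h3, Real.mul_rpow h1 h2]
  ring

lemma Ival (p μ : ℝ) (hp : 0 < p) (hμ : 0 < μ) (n : ℕ)
    (hbeta : ∫ x in (0:ℝ)..1, x ^ n * (1 - x) ^ (μ - 1) =
      n.factorial * Real.Gamma μ / Real.Gamma (n + μ + 1)) :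
    ∫ τ in (0:ℝ)..p, τ ^ (2 * n + 1) * (p ^ 2 - τ ^ 2) ^ (μ - 1) =
      p ^ (2 * (n:ℝ) + 2 * μ) * n.factorial * Real.Gamma μ /
        (2 * Real.Gamma ((n:ℝ) + μ + 1)) := by
  set g : ℝ → ℝ := fun u => u ^ n * (p ^ 2 - u) ^ (μ - 1) with hg
  have hgint : IntervalIntegrable g volume 0 (p ^ 2) :=
    (ii_lin (p ^ 2) μ hμ).continuousOn_mul (continuous_pow n).continuousOn
  have hsubst : ∫ τ in (0:ℝ)..p, (2 * τ) • g (τ ^ 2) = ∫ u in (0:ℝ)..p ^ 2, g u := by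
    have := intervalIntegral.integral_comp_smul_deriv''' (a := 0) (b := p)
      (f := fun τ => τ ^ 2) (f' := fun τ => 2 * τ) (g := g)
      ((continuous_pow 2).continuousOn)
      (fun x _ => by simpa using (hasDerivAt_pow 2 x).hasDerivWithinAt)
      ?_ ?_ ?_
    · simpa using this
    · apply ContinuousOn.mono (s := Set.Ioo 0 (p ^ 2))
      · apply (continuousOn_pow n).mul
        apply (continuousOn_const.sub continuousOn_id).rpow_const
        intro x hx
        left
        exact sub_ne_zero.mpr (ne_of_gt hx.2)
      · rintro u ⟨τ, hτ, rfl⟩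
        rw [min_eq_left hp.le, max_eq_right hp.le] at hτ
        dsimp only
        exact ⟨by nlinarith [hτ.1, hτ.2], by nlinarith [hτ.1, hτ.2]⟩
    · apply (intervalIntegrable_iff_integrableOn_Icc_of_le (by positivity)).mp hgint |>.mono_set
      rintro u ⟨τ, hτ, rfl⟩
      rw [Set.uIcc_of_le hp.le] at hτ
      dsimp only
      exact ⟨by nlinarith [hτ.1, hτ.2], by nlinarith [hτ.1, hτ.2]⟩
    · have h2 : (fun τ => (2 * τ) • g (τ ^ 2)) =
          fun τ => (2 * τ ^ (2 * n + 1)) * (p ^ 2 - τ ^ 2) ^ (μ - 1) := by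
        funext τ
        simp only [hg, smul_eq_mul, ← pow_mul]
        ring_nf
      dsimp only [Function.comp]
      rw [show (fun x : ℝ => (2 * x) • g (x ^ 2)) =
          fun τ => (2 * τ ^ (2 * n + 1)) * (p ^ 2 - τ ^ 2) ^ (μ - 1) from h2]
      rw [Set.uIcc_of_le hp.le, ← intervalIntegrable_iff_integrableOn_Icc_of_le hp.le]
      exact ii_quad p μ hp hμ _ (by fun_prop)
  have hL : ∫ τ in (0:ℝ)..p, τ ^ (2 * n + 1) * (p ^ 2 - τ ^ 2) ^ (μ - 1) =
      (1 / 2) * ∫ u in (0:ℝ)..p ^ 2, g u := by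
    rw [← hsubst, ← intervalIntegral.integral_const_mul]
    apply intervalIntegral.integral_congr
    intro τ _
    simp only [hg, smul_eq_mul, ← pow_mul]
    ring
  have hscale := intervalIntegral.integral_comp_mul_right (a := (0:ℝ)) (b := 1) g
    (show (p ^ 2 : ℝ) ≠ 0 by positivity)
  rw [zero_mul, one_mul, smul_eq_mul] at hscale
  have hcongr : ∫ x in (0:ℝ)..1, g (x * p ^ 2) =
      (p ^ (2 * n) * (p ^ 2) ^ (μ - 1)) * ∫ x in (0:ℝ)..1, x ^ n * (1 - x) ^ (μ - 1) := by
    rw [← intervalIntegral.integral_const_mul]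
    apply intervalIntegral.integral_congr
    intro x hx
    rw [Set.uIcc_of_le zero_le_one] at hx
    simp only [hg]
    rw [show p ^ 2 - x * p ^ 2 = p ^ 2 * (1 - x) by ring,
      Real.mul_rpow (by positivity) (by linarith [hx.2]), mul_pow, ← pow_mul]
    ring
  have hpow : (p:ℝ) ^ (2 * (n:ℝ) + 2 * μ) = p ^ 2 * p ^ (2 * n) * (p ^ 2) ^ (μ - 1) := by
    rw [← Real.rpow_natCast p 2, ← Real.rpow_natCast p (2 * n), ← Real.rpow_mul hp.le,
      ← Real.rpow_add hp, ← Real.rpow_add hp]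
    congr 1
    push_cast
    ring
  have hΓ : 0 < Real.Gamma ((n:ℝ) + μ + 1) := Real.Gamma_pos_of_pos (by positivity)
  rw [hcongr, hbeta] at hscale
  have h5 : ∫ x in (0:ℝ)..p ^ 2, g x =
      p ^ 2 * (p ^ (2 * n) * (p ^ 2) ^ (μ - 1) *
        (n.factorial * Real.Gamma μ / Real.Gamma ((n:ℝ) + μ + 1))) := by
    have hp2 : (p ^ 2 : ℝ) ≠ 0 := by positivity
    field_simp at hscale ⊢
    linarith [hscale]
  rw [hL, h5, hpow]
  field_simp

lemma beta_val (μ : ℝ) (hμ : 0 < μ) (n : ℕ) :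
    ∫ x in (0:ℝ)..1, x ^ n * (1 - x) ^ (μ - 1) =
      n.factorial * Real.Gamma μ / Real.Gamma (n + μ + 1) := by
  have hs : 0 < Complex.re ((n:ℂ) + 1) := by simp; positivity
  have ht : 0 < Complex.re ((μ:ℂ)) := by simpa using hμ
  have h := Complex.Gamma_mul_Gamma_eq_betaIntegral hs ht
  have hbeta : Complex.betaIntegral ((n:ℂ) + 1) μ =
      ((∫ x in (0:ℝ)..1, x ^ n * (1 - x) ^ (μ - 1) : ℝ) : ℂ) := by
    rw [Complex.betaIntegral, ← intervalIntegral.integral_ofReal]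
    apply intervalIntegral.integral_congr
    intro x hx
    rw [Set.uIcc_of_le zero_le_one] at hx
    have h1x : (0:ℝ) ≤ 1 - x := by linarith [hx.2]
    simp only [Complex.ofReal_mul]
    rw [Complex.ofReal_cpow h1x]
    push_cast
    rw [add_sub_cancel_right, Complex.cpow_natCast]
  rw [hbeta] at h
  have hGn : Complex.Gamma ((n:ℂ) + 1) = ((n.factorial : ℝ) : ℂ) := by
    rw [(by push_cast; ring : ((n:ℂ) + 1) = ((((n:ℝ) + 1) : ℝ) : ℂ)), Complex.Gamma_ofReal]
    rw [(by push_cast; ring : ((n:ℝ) + 1) = ((n:ℕ) : ℝ) + 1), Real.Gamma_nat_eq_factorial]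
  have hGm : Complex.Gamma ((μ:ℂ)) = ((Real.Gamma μ : ℝ) : ℂ) := Complex.Gamma_ofReal μ
  have hGs : Complex.Gamma ((n:ℂ) + 1 + (μ:ℂ)) = ((Real.Gamma (n + μ + 1) : ℝ) : ℂ) := by
    rw [(by push_cast; ring : ((n:ℂ) + 1 + (μ:ℂ)) = ((((n:ℝ) + μ + 1) : ℝ) : ℂ)),
      Complex.Gamma_ofReal]
  rw [hGn, hGm, hGs, ← Complex.ofReal_mul, ← Complex.ofReal_mul] at h
  have h' := Complex.ofReal_injective h
  have hpos : 0 < Real.Gamma ((n:ℝ) + μ + 1) := Real.Gamma_pos_of_pos (by positivity)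
  field_simp
  linarith [h']

lemma exp_tsum (x : ℝ) : Real.exp x = ∑' n : ℕ, x ^ n / n.factorial := by
  rw [Real.exp_eq_exp_ℝ, NormedSpace.exp_eq_tsum_div]

theorem integral_exp_mul_pow_rpow_eq (p M μ : ℝ) (hp : 0 < p) (hM : 0 < M) (hμ : 0 < μ)
    (k : ℕ) :
    ∫ τ in (0 : ℝ)..p, Real.exp (-M * τ ^ 2) * τ ^ (2 * k + 1) * (p ^ 2 - τ ^ 2) ^ (μ - 1) =
      p ^ (2 * (k : ℝ) + 2 * μ) * k.factorial * Real.Gamma μ /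
        (2 * Real.Gamma ((k : ℝ) + μ + 1)) *
        oneFOne ((k : ℝ) + 1) ((k : ℝ) + μ + 1) (-M * p ^ 2) := by
  set F : ℕ → ℝ → ℝ := fun r τ =>
    ((-M) ^ r / r.factorial * τ ^ (2 * (k + r) + 1)) * (p ^ 2 - τ ^ 2) ^ (μ - 1) with hF
  have hFi : ∀ r : ℕ, IntegrableOn (F r) (Set.Ioc 0 p) volume := fun r =>
    (intervalIntegrable_iff_integrableOn_Ioc_of_le hp.le).mp
      (ii_quad p μ hp hμ _ (by fun_prop))
  have hBi : ∀ n : ℕ, IntegrableOn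
      (fun τ => τ ^ (2 * n + 1) * (p ^ 2 - τ ^ 2) ^ (μ - 1)) (Set.Ioc 0 p) volume := fun n =>
    (intervalIntegrable_iff_integrableOn_Ioc_of_le hp.le).mp
      (ii_quad p μ hp hμ _ (by fun_prop))
  -- summability of integrals of norms
  have hbound : ∀ r : ℕ, (∫ τ in Set.Ioc 0 p, ‖F r τ‖) ≤
      (M * p ^ 2) ^ r / r.factorial *
        ∫ τ in Set.Ioc 0 p, τ ^ (2 * k + 1) * (p ^ 2 - τ ^ 2) ^ (μ - 1) := by
    intro r
    rw [← MeasureTheory.integral_const_mul]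
    apply setIntegral_mono_on ((hFi r).norm) ((hBi k).const_mul _) measurableSet_Ioc
    intro τ hτ
    have hτ0 : 0 < τ := hτ.1
    have hτp : τ ≤ p := hτ.2
    have hXnn : (0:ℝ) ≤ (p ^ 2 - τ ^ 2) ^ (μ - 1) := Real.rpow_nonneg (by nlinarith) _
    have hnorm : ‖F r τ‖ =
        M ^ r / r.factorial * τ ^ (2 * (k + r) + 1) * (p ^ 2 - τ ^ 2) ^ (μ - 1) := by
      simp only [hF, Real.norm_eq_abs, abs_mul, abs_div, abs_pow, abs_neg, abs_of_pos hM,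
        abs_of_pos hτ0, abs_of_nonneg hXnn, Nat.abs_cast]
    rw [hnorm, show 2 * (k + r) + 1 = (2 * k + 1) + 2 * r by ring, pow_add,
      show (M * p ^ 2) ^ r = M ^ r * p ^ (2 * r) by rw [mul_pow, pow_mul]]
    have h2 : τ ^ (2 * r) ≤ p ^ (2 * r) := pow_le_pow_left₀ hτ0.le hτp _
    have key := mul_le_mul_of_nonneg_left h2
      (show (0:ℝ) ≤ M ^ r / r.factorial *
        (τ ^ (2 * k + 1) * (p ^ 2 - τ ^ 2) ^ (μ - 1)) by
          exact mul_nonneg (by positivity) (mul_nonneg (by positivity) hXnn))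
    ring_nf
    ring_nf at key
    linarith [key]
  have hsum : Summable fun r : ℕ => ∫ τ in Set.Ioc 0 p, ‖F r τ‖ := by
    apply Summable.of_nonneg_of_le
      (fun r => integral_nonneg fun τ => norm_nonneg _) hbound
    exact (Real.summable_pow_div_factorial (M * p ^ 2)).mul_right _
  have hswap := MeasureTheory.integral_tsum_of_summable_integral_norm
    (μ := volume.restrict (Set.Ioc 0 p)) (F := F) hFi hsum
  have hpt : ∀ τ : ℝ, ∑' r : ℕ, F r τ =
      Real.exp (-M * τ ^ 2) * τ ^ (2 * k + 1) * (p ^ 2 - τ ^ 2) ^ (μ - 1) := by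
    intro τ
    have he : ∀ r : ℕ, F r τ = ((-M * τ ^ 2) ^ r / r.factorial) *
        (τ ^ (2 * k + 1) * (p ^ 2 - τ ^ 2) ^ (μ - 1)) := by
      intro r
      simp only [hF]
      rw [show 2 * (k + r) + 1 = (2 * k + 1) + 2 * r by ring, pow_add,
        show (-M * τ ^ 2) ^ r = (-M) ^ r * τ ^ (2 * r) by rw [mul_pow, pow_mul]]
      ring
    rw [tsum_congr he, tsum_mul_right, ← exp_tsum]
    ring
  rw [intervalIntegral.integral_of_le hp.le]
  have hfun : (fun τ => Real.exp (-M * τ ^ 2) * τ ^ (2 * k + 1) *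
      (p ^ 2 - τ ^ 2) ^ (μ - 1)) = fun τ => ∑' r : ℕ, F r τ :=
    funext fun τ => (hpt τ).symm
  rw [hfun, ← hswap]
  have hterm : ∀ r : ℕ, (∫ τ in Set.Ioc 0 p, F r τ) =
      (-M) ^ r / r.factorial *
        (p ^ (2 * ((k + r : ℕ) : ℝ) + 2 * μ) * (k + r).factorial * Real.Gamma μ /
          (2 * Real.Gamma (((k + r : ℕ) : ℝ) + μ + 1))) := by
    intro r
    rw [← intervalIntegral.integral_of_le hp.le]
    have he : F r = fun τ => (-M) ^ r / r.factorial *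
        (τ ^ (2 * (k + r) + 1) * (p ^ 2 - τ ^ 2) ^ (μ - 1)) := by
      funext τ; simp only [hF, mul_assoc]
    rw [he, intervalIntegral.integral_const_mul, Ival p μ hp hμ (k + r) (beta_val μ hμ (k + r))]
  rw [tsum_congr hterm, oneFOne, ← tsum_mul_left]
  apply tsum_congr
  intro r
  have e1 : Real.Gamma ((k:ℝ) + 1 + r) = (k + r).factorial := by
    rw [show ((k:ℝ) + 1 + (r:ℕ)) = (((k + r : ℕ)):ℝ) + 1 by push_cast; ring,
      Real.Gamma_nat_eq_factorial]
  have e2 : Real.Gamma ((k:ℝ) + 1) = k.factorial := Real.Gamma_nat_eq_factorial k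
  have e3 : Real.Gamma ((k:ℝ) + μ + 1 + r) = Real.Gamma ((((k + r : ℕ)):ℝ) + μ + 1) := by
    congr 1; push_cast; ring
  have e4 : (-M * p ^ 2) ^ r = (-M) ^ r * p ^ (2 * r) := by rw [mul_pow, pow_mul]
  have e5 : p ^ (2 * (((k + r : ℕ)):ℝ) + 2 * μ) =
      p ^ (2 * (k:ℝ) + 2 * μ) * p ^ (2 * r) := by
    rw [← Real.rpow_natCast p (2 * r), ← Real.rpow_add hp]
    congr 1; push_cast; ring
  have hΓ1 : (0:ℝ) < Real.Gamma ((k:ℝ) + μ + 1) := Real.Gamma_pos_of_pos (by positivity)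
  have hΓ2 : (0:ℝ) < Real.Gamma ((((k + r : ℕ)):ℝ) + μ + 1) :=
    Real.Gamma_pos_of_pos (by positivity)
  rw [e1, e2, e3, e4, e5]
  have hkf : ((k.factorial : ℝ)) ≠ 0 := Nat.cast_ne_zero.mpr k.factorial_ne_zero
  have hrf : ((r.factorial : ℝ)) ≠ 0 := Nat.cast_ne_zero.mpr r.factorial_ne_zero
  field_simp
end

section
/- For a ≥ 0 and χ ≥ 1 with a ≤ χ, the upper incomplete gamma function satisfies Γ(a, χ) ≤ 2 e^{-χ} χ^a. -/
open MeasureTheory Real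

/-- The upper incomplete gamma function `Γ(a, χ) = ∫_χ^∞ e^{-t} t^{a-1} dt`. -/
noncomputable def upperGamma (a χ : ℝ) : ℝ :=
  ∫ t in Set.Ioi χ, Real.exp (-t) * t ^ (a - 1)

lemma integral_exp_neg_mul_Ioi' {b : ℝ} (hb : 0 < b) (c : ℝ) :
    (∫ t in Set.Ioi c, Real.exp (-(b * t))) = Real.exp (-(b * c)) / b := by
  rw [MeasureTheory.integral_comp_mul_left_Ioi (fun x => Real.exp (-x)) c hb,
    integral_exp_neg_Ioi]
  rw [smul_eq_mul, div_eq_inv_mul]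

theorem upperGamma_le (a χ : ℝ) (ha : 0 ≤ a) (hχ : 1 ≤ χ) (haχ : a ≤ χ) :
    upperGamma a χ ≤ 2 * Real.exp (-χ) * χ ^ a := by
  have hχ0 : (0:ℝ) < χ := lt_of_lt_of_le one_pos hχ
  set m : ℝ := max (a - 1) 0 with hm
  have hm0 : 0 ≤ m := le_max_right _ _
  have hmχ : m ≤ χ - 1 := max_le (by linarith) (by linarith)
  set c : ℝ := m / χ with hc
  have hc0 : 0 ≤ c := div_nonneg hm0 hχ0.le
  set b : ℝ := 1 - c with hb
  have hb0 : 0 < b := by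
    have : c < 1 := (div_lt_one hχ0).mpr (by linarith)
    simp [hb]; linarith
  set K : ℝ := χ ^ (a - 1) * Real.exp (-(c * χ)) with hK
  have hK0 : 0 ≤ K := mul_nonneg (Real.rpow_nonneg hχ0.le _) (Real.exp_pos _).le
  -- pointwise bound on Ioi χ
  have hpt : ∀ t ∈ Set.Ioi χ, Real.exp (-t) * t ^ (a - 1) ≤ K * Real.exp (-(b * t)) := by
    intro t ht
    have htχ : χ ≤ t := le_of_lt ht
    have ht0 : 0 < t := lt_of_lt_of_le hχ0 htχ
    have key : t ^ (a - 1) ≤ χ ^ (a - 1) * Real.exp (c * (t - χ)) := by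
      rcases le_or_gt a 1 with h1 | h1
      · have hmz : m = 0 := max_eq_right (by linarith)
        have hcz : c = 0 := by simp [hc, hmz]
        rw [hcz]
        simpa using Real.rpow_le_rpow_of_nonpos hχ0 htχ (by linarith)
      · have hmz : m = a - 1 := max_eq_left (by linarith)
        rw [Real.rpow_def_of_pos ht0, Real.rpow_def_of_pos hχ0, ← Real.exp_add]
        apply Real.exp_le_exp.mpr
        have hlog : Real.log (t / χ) ≤ t / χ - 1 :=
          Real.log_le_sub_one_of_pos (div_pos ht0 hχ0)
        rw [Real.log_div ht0.ne' hχ0.ne'] at hlog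
        have hceq : c * (t - χ) = (a - 1) * (t / χ - 1) := by
          rw [hc, hmz]; field_simp
        rw [hceq]
        have := mul_le_mul_of_nonneg_left hlog (by linarith : (0:ℝ) ≤ a - 1)
        nlinarith [this]
    calc Real.exp (-t) * t ^ (a - 1)
        ≤ Real.exp (-t) * (χ ^ (a - 1) * Real.exp (c * (t - χ))) :=
          mul_le_mul_of_nonneg_left key (Real.exp_pos _).le
      _ = K * Real.exp (-(b * t)) := by
          have hee : Real.exp (-t) * Real.exp (c * (t - χ))
              = Real.exp (-(c * χ)) * Real.exp (-(b * t)) := by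
            rw [← Real.exp_add, ← Real.exp_add]; congr 1; rw [hb]; ring
          calc Real.exp (-t) * (χ ^ (a - 1) * Real.exp (c * (t - χ)))
              = χ ^ (a - 1) * (Real.exp (-t) * Real.exp (c * (t - χ))) := by ring
            _ = K * Real.exp (-(b * t)) := by rw [hee, hK]; ring
  -- measurability and nonnegativity of f
  have hfmeas : AEStronglyMeasurable (fun t : ℝ => Real.exp (-t) * t ^ (a - 1))
      (volume.restrict (Set.Ioi χ)) := by
    apply Measurable.aestronglyMeasurable
    exact (Real.measurable_exp.comp measurable_neg).mul
      (measurable_id.pow_const _)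
  have hfnn : ∀ t ∈ Set.Ioi χ, 0 ≤ Real.exp (-t) * t ^ (a - 1) := by
    intro t ht
    exact mul_nonneg (Real.exp_pos _).le
      (Real.rpow_nonneg (le_of_lt (lt_of_lt_of_le hχ0 (le_of_lt ht))) _)
  -- integrability of g
  have hg : IntegrableOn (fun t : ℝ => K * Real.exp (-(b * t))) (Set.Ioi χ) := by
    have h := (exp_neg_integrableOn_Ioi χ hb0).const_mul K
    simp only [neg_mul] at h
    exact h
  -- integrability of f
  have hf : IntegrableOn (fun t : ℝ => Real.exp (-t) * t ^ (a - 1)) (Set.Ioi χ) := by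
    apply Integrable.mono' hg hfmeas
    filter_upwards [ae_restrict_mem measurableSet_Ioi] with t ht
    rw [Real.norm_eq_abs, abs_of_nonneg (hfnn t ht)]
    exact hpt t ht
  -- compare integrals
  have hle : upperGamma a χ ≤ ∫ t in Set.Ioi χ, K * Real.exp (-(b * t)) := by
    apply setIntegral_mono_on hf hg measurableSet_Ioi hpt
  have hint : (∫ t in Set.Ioi χ, K * Real.exp (-(b * t)))
      = K * (Real.exp (-(b * χ)) / b) := by
    rw [MeasureTheory.integral_const_mul, integral_exp_neg_mul_Ioi' hb0]
  -- final arithmetic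
  have hfinal : K * (Real.exp (-(b * χ)) / b) ≤ 2 * Real.exp (-χ) * χ ^ a := by
    have he : K * Real.exp (-(b * χ)) = χ ^ (a - 1) * Real.exp (-χ) := by
      rw [hK, mul_assoc, ← Real.exp_add]
      congr 1
      rw [hb]; ring
    rw [mul_div_assoc'] at *
    rw [he]
    rw [div_le_iff₀ hb0]
    have hχa : χ ^ (a - 1) * χ = χ ^ a := by
      rw [← Real.rpow_add_one hχ0.ne' (a - 1)]; ring_nf
    have hbge : 1 / (2 * χ) ≤ b := by
      have h1 : χ - m ≥ 1 := by linarith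
      have : b = (χ - m) / χ := by rw [hb, hc]; field_simp
      rw [this, div_le_div_iff₀ (by positivity) hχ0]
      nlinarith
    have hχapos : 0 < χ ^ a := Real.rpow_pos_of_pos hχ0 _
    have hχa1pos : 0 < χ ^ (a - 1) := Real.rpow_pos_of_pos hχ0 _
    calc χ ^ (a - 1) * Real.exp (-χ)
        = (2 * Real.exp (-χ) * χ ^ a) * (1 / (2 * χ)) := by
          rw [← hχa]; field_simp
      _ ≤ (2 * Real.exp (-χ) * χ ^ a) * b := by
          apply mul_le_mul_of_nonneg_left hbge
          positivity
  calc upperGamma a χ ≤ _ := hle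
    _ = _ := hint
    _ ≤ _ := hfinal
end

section
/- Let I₁ = ∫₀^p e^{-Mτ²} sin(2Mτ) (p² − τ²)^{-1/2} dτ with p > 0, M > 0, x = 2Mp, ρ = Mp². Then I₁ = (√π/2) ∑_{k=0}^∞ ((−1)^k x^{2k+1} / (2k+1)!) · (k!/Γ(k+3/2)) · ₁F₁(k+1; k+3/2; −ρ). -/
open MeasureTheory Real

open Set

private lemma hasDerivAt_inner (p τ : ℝ) :
    HasDerivAt (fun t : ℝ => p ^ 2 - t ^ 2) (-(2 * τ)) τ := by
  simpa using (hasDerivAt_pow 2 τ).const_sub (p ^ 2)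

private lemma hasDerivAt_sqrt_sub {p τ : ℝ} (hs : 0 < p ^ 2 - τ ^ 2) :
    HasDerivAt (fun t : ℝ => Real.sqrt (p ^ 2 - t ^ 2))
      (-τ / Real.sqrt (p ^ 2 - τ ^ 2)) τ := by
  have h := (Real.hasDerivAt_sqrt (ne_of_gt hs)).comp τ (hasDerivAt_inner p τ)
  refine h.congr_deriv (Eq.symm ?_)
  have h0 : Real.sqrt (p ^ 2 - τ ^ 2) ≠ 0 := Real.sqrt_ne_zero'.mpr hs
  field_simp

private lemma hasDerivAt_F (n : ℕ) {p τ : ℝ} (hs : 0 < p ^ 2 - τ ^ 2) :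
    HasDerivAt (fun t : ℝ => -(t ^ (2 * n + 2) * Real.sqrt (p ^ 2 - t ^ 2)))
      ((2 * n + 3) * (τ ^ (2 * (n + 1) + 1) / Real.sqrt (p ^ 2 - τ ^ 2))
        - (2 * n + 2) * p ^ 2 * (τ ^ (2 * n + 1) / Real.sqrt (p ^ 2 - τ ^ 2))) τ := by
  have h1 := ((hasDerivAt_pow (2 * n + 2) τ).mul (hasDerivAt_sqrt_sub hs)).neg
  refine h1.congr_deriv (Eq.symm ?_)
  have hq : Real.sqrt (p ^ 2 - τ ^ 2) ^ 2 = p ^ 2 - τ ^ 2 := Real.sq_sqrt hs.le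
  have h0 : Real.sqrt (p ^ 2 - τ ^ 2) ≠ 0 := Real.sqrt_ne_zero'.mpr hs
  have hp2 : p ^ 2 = Real.sqrt (p ^ 2 - τ ^ 2) ^ 2 + τ ^ 2 := by linarith
  have he : 2 * n + 2 - 1 = 2 * n + 1 := by omega
  rw [he]
  field_simp
  push_cast
  linear_combination (2 * (n:ℝ) + 2) * τ ^ (2*n+1) * hq

private lemma contOn_negsqrt (p : ℝ) (k : ℕ) :
    ContinuousOn (fun t : ℝ => -(t ^ k * Real.sqrt (p ^ 2 - t ^ 2))) (Icc 0 p) := by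
  fun_prop

private lemma integrableOn_base {p : ℝ} (hp : 0 < p) :
    IntegrableOn (fun τ : ℝ => τ / Real.sqrt (p ^ 2 - τ ^ 2)) (Ioc 0 p) := by
  refine intervalIntegral.integrableOn_deriv_of_nonneg
      (g := fun t : ℝ => -Real.sqrt (p ^ 2 - t ^ 2)) (by fun_prop)
      (fun x hx => ?_) (fun x hx => ?_)
  · have hs : 0 < p ^ 2 - x ^ 2 := by nlinarith [hx.1, hx.2]
    simpa [neg_div] using (hasDerivAt_sqrt_sub hs).fun_neg
  · exact div_nonneg hx.1.le (Real.sqrt_nonneg _)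

private lemma h_nonneg {p τ : ℝ} (n : ℕ) (hτ : τ ∈ Ioc (0:ℝ) p) :
    0 ≤ τ ^ (2 * n + 1) / Real.sqrt (p ^ 2 - τ ^ 2) :=
  div_nonneg (pow_nonneg hτ.1.le _) (Real.sqrt_nonneg _)

private lemma pointwise_le {p : ℝ} (hp : 0 < p) (n : ℕ) {τ : ℝ} (hτ : τ ∈ Ioc (0:ℝ) p) :
    τ ^ (2 * n + 1) / Real.sqrt (p ^ 2 - τ ^ 2)
      ≤ p ^ (2 * n) * (τ / Real.sqrt (p ^ 2 - τ ^ 2)) := by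
  rw [mul_div_assoc']
  refine div_le_div_of_nonneg_right ?_ (Real.sqrt_nonneg _)
  calc τ ^ (2 * n + 1) = τ ^ (2 * n) * τ := by rw [pow_succ]
    _ ≤ p ^ (2 * n) * τ :=
      mul_le_mul_of_nonneg_right (pow_le_pow_left₀ hτ.1.le hτ.2 _) hτ.1.le

private lemma integrableOn_h {p : ℝ} (hp : 0 < p) (n : ℕ) :
    IntegrableOn (fun τ : ℝ => τ ^ (2 * n + 1) / Real.sqrt (p ^ 2 - τ ^ 2)) (Ioc 0 p) := by
  refine ((integrableOn_base hp).const_mul (p ^ (2 * n))).mono' ?_ ?_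
  · exact (Measurable.aestronglyMeasurable (by fun_prop))
  · filter_upwards [ae_restrict_mem measurableSet_Ioc] with τ hτ
    rw [Real.norm_eq_abs, abs_of_nonneg (h_nonneg n hτ)]
    exact pointwise_le hp n hτ

private lemma integral_base {p : ℝ} (hp : 0 < p) :
    ∫ τ in Ioc (0:ℝ) p, τ / Real.sqrt (p ^ 2 - τ ^ 2) = p := by
  rw [← intervalIntegral.integral_of_le hp.le]
  have h := intervalIntegral.integral_eq_sub_of_hasDerivAt_of_le hp.le
      (f := fun t : ℝ => -Real.sqrt (p ^ 2 - t ^ 2))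
      (f' := fun τ : ℝ => τ / Real.sqrt (p ^ 2 - τ ^ 2))
      (by fun_prop) (fun x hx => ?_)
      ((intervalIntegrable_iff_integrableOn_Ioc_of_le hp.le).mpr (integrableOn_base hp))
  · rw [h]
    simp [Real.sqrt_sq hp.le]
  · have hs : 0 < p ^ 2 - x ^ 2 := by nlinarith [hx.1, hx.2]
    simpa [neg_div] using (hasDerivAt_sqrt_sub hs).fun_neg

private lemma ftc_zero {p : ℝ} (hp : 0 < p) (n : ℕ) :
    (2 * (n:ℝ) + 3) * ∫ τ in Ioc (0:ℝ) p, τ ^ (2 * (n+1) + 1) / Real.sqrt (p ^ 2 - τ ^ 2)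
      = (2 * (n:ℝ) + 2) * p ^ 2 * ∫ τ in Ioc (0:ℝ) p, τ ^ (2 * n + 1) / Real.sqrt (p ^ 2 - τ ^ 2) := by
  have h1 := (integrableOn_h hp (n+1)).const_mul (2 * (n:ℝ) + 3)
  have h2 := (integrableOn_h hp n).const_mul ((2 * (n:ℝ) + 2) * p ^ 2)
  have hder : ∀ x ∈ Ioo (0:ℝ) p,
      HasDerivAt (fun t : ℝ => -(t ^ (2 * n + 2) * Real.sqrt (p ^ 2 - t ^ 2)))
        ((2 * (n:ℝ) + 3) * (x ^ (2 * (n+1) + 1) / Real.sqrt (p ^ 2 - x ^ 2))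
          - (2 * (n:ℝ) + 2) * p ^ 2 * (x ^ (2 * n + 1) / Real.sqrt (p ^ 2 - x ^ 2))) x := by
    intro x hx
    have hs : 0 < p ^ 2 - x ^ 2 := by nlinarith [hx.1, hx.2]
    have hF := hasDerivAt_F n (p := p) hs
    push_cast at hF
    exact hF
  have h := intervalIntegral.integral_eq_sub_of_hasDerivAt_of_le hp.le
      (contOn_negsqrt p _) hder
      ((intervalIntegrable_iff_integrableOn_Ioc_of_le hp.le).mpr (h1.sub h2))
  rw [intervalIntegral.integral_of_le hp.le,
    integral_sub h1 h2, integral_const_mul, integral_const_mul] at h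
  have hz : -(p ^ (2*n+2) * Real.sqrt (p^2 - p^2)) - -((0:ℝ) ^ (2*n+2) * Real.sqrt (p^2 - 0^2)) = 0 := by
    simp
  rw [hz] at h
  linarith [h]

private lemma Gamma_three_halves : Real.Gamma (3/2 : ℝ) = Real.sqrt π / 2 := by
  rw [show (3/2 : ℝ) = 1/2 + 1 by norm_num, Real.Gamma_add_one (by norm_num),
    Real.Gamma_one_half_eq]
  ring

private lemma integral_h {p : ℝ} (hp : 0 < p) (n : ℕ) :
    ∫ τ in Ioc (0:ℝ) p, τ ^ (2 * n + 1) / Real.sqrt (p ^ 2 - τ ^ 2)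
      = p ^ (2 * n + 1) * n.factorial * Real.sqrt π / (2 * Real.Gamma ((n : ℝ) + 3 / 2)) := by
  have hπ : (0:ℝ) < Real.sqrt π := Real.sqrt_pos.mpr Real.pi_pos
  induction n with
  | zero =>
      simp only [Nat.cast_zero, zero_add, mul_zero, Nat.factorial_zero, Nat.cast_one]
      rw [Gamma_three_halves]
      have : ∀ τ : ℝ, τ ^ (2 * 0 + 1) = τ := fun τ => pow_one τ
      simp only [this]
      rw [integral_base hp]
      field_simp
  | succ n ih =>
      have key := ftc_zero hp n
      rw [ih] at key
      have hΓpos : 0 < Real.Gamma ((n:ℝ) + 3/2) := Real.Gamma_pos_of_pos (by positivity)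
      have hΓ : Real.Gamma (((n:ℕ) + 1 : ℕ) + 3/2 : ℝ) = ((n:ℝ) + 3/2) * Real.Gamma ((n:ℝ) + 3/2) := by
        push_cast
        rw [show (n:ℝ) + 1 + 3/2 = ((n:ℝ) + 3/2) + 1 by ring, Real.Gamma_add_one (by positivity)]
      have h23 : (2 * (n:ℝ) + 3) ≠ 0 := by positivity
      have : (∫ τ in Ioc (0:ℝ) p, τ ^ (2 * (n+1) + 1) / Real.sqrt (p ^ 2 - τ ^ 2))
          = (2 * (n:ℝ) + 2) * p ^ 2 *
            (p ^ (2 * n + 1) * n.factorial * Real.sqrt π / (2 * Real.Gamma ((n : ℝ) + 3 / 2)))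
            / (2 * (n:ℝ) + 3) := by
        field_simp at key ⊢
        linarith [key]
      rw [this, hΓ]
      rw [show 2 * (n + 1) + 1 = (2 * n + 1) + 2 by ring, pow_add, Nat.factorial_succ]
      push_cast
      field_simp
      ring

private lemma integral_h_le {p : ℝ} (hp : 0 < p) (n : ℕ) :
    ∫ τ in Ioc (0:ℝ) p, τ ^ (2 * n + 1) / Real.sqrt (p ^ 2 - τ ^ 2) ≤ p ^ (2 * n + 1) := by
  have h1 : ∫ τ in Ioc (0:ℝ) p, τ ^ (2 * n + 1) / Real.sqrt (p ^ 2 - τ ^ 2)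
      ≤ ∫ τ in Ioc (0:ℝ) p, p ^ (2 * n) * (τ / Real.sqrt (p ^ 2 - τ ^ 2)) :=
    setIntegral_mono_on (integrableOn_h hp n) ((integrableOn_base hp).const_mul _)
      measurableSet_Ioc (fun τ hτ => pointwise_le hp n hτ)
  calc _ ≤ ∫ τ in Ioc (0:ℝ) p, p ^ (2 * n) * (τ / Real.sqrt (p ^ 2 - τ ^ 2)) := h1
    _ = p ^ (2 * n) * p := by rw [integral_const_mul, integral_base hp]
    _ = p ^ (2 * n + 1) := by rw [pow_succ]

private noncomputable def aCoef (M : ℝ) (k : ℕ) : ℝ :=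
  (-1) ^ k * (2 * M) ^ (2 * k + 1) / (2 * k + 1).factorial

private noncomputable def bCoef (M : ℝ) (r : ℕ) : ℝ := (-M) ^ r / r.factorial

private noncomputable def fFun (p M : ℝ) (kr : ℕ × ℕ) (τ : ℝ) : ℝ :=
  aCoef M kr.1 * bCoef M kr.2 * (τ ^ (2 * (kr.1 + kr.2) + 1) / Real.sqrt (p ^ 2 - τ ^ 2))

private lemma summable_odd (q : ℝ) :
    Summable (fun k : ℕ => q ^ (2 * k + 1) / (2 * k + 1).factorial) :=
  (Real.summable_pow_div_factorial q).comp_injective (fun a b hab => by omega)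

private lemma abs_aCoef {M : ℝ} (hM : 0 < M) {p : ℝ} (hp : 0 < p) (k : ℕ) :
    |aCoef M k| * p ^ (2 * k + 1) = (2 * M * p) ^ (2 * k + 1) / (2 * k + 1).factorial := by
  unfold aCoef
  rw [abs_div, abs_mul, abs_pow, abs_neg, abs_one, one_pow, one_mul, abs_pow,
    abs_of_pos (by linarith : (0:ℝ) < 2 * M), Nat.abs_cast, mul_pow (2*M) p]
  ring

private lemma abs_bCoef {M : ℝ} (hM : 0 < M) {p : ℝ} (hp : 0 < p) (r : ℕ) :
    |bCoef M r| * p ^ (2 * r) = (M * p ^ 2) ^ r / r.factorial := by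
  unfold bCoef
  rw [abs_div, abs_pow, abs_neg, abs_of_pos hM, Nat.abs_cast, mul_pow, pow_mul]
  ring

private lemma integrableOn_f {p M : ℝ} (hp : 0 < p) (kr : ℕ × ℕ) :
    IntegrableOn (fFun p M kr) (Ioc 0 p) :=
  (integrableOn_h hp (kr.1 + kr.2)).const_mul _

private lemma norm_integral_f {p M : ℝ} (hp : 0 < p) (kr : ℕ × ℕ) :
    ∫ τ in Ioc (0:ℝ) p, ‖fFun p M kr τ‖
      = |aCoef M kr.1 * bCoef M kr.2| *
        ∫ τ in Ioc (0:ℝ) p, τ ^ (2 * (kr.1 + kr.2) + 1) / Real.sqrt (p ^ 2 - τ ^ 2) := by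
  rw [← integral_const_mul]
  refine setIntegral_congr_fun measurableSet_Ioc (fun τ hτ => ?_)
  unfold fFun
  rw [Real.norm_eq_abs, abs_mul, abs_of_nonneg (h_nonneg _ hτ)]

private lemma summable_norm_integral {p M : ℝ} (hp : 0 < p) (hM : 0 < M) :
    Summable (fun kr : ℕ × ℕ => ∫ τ in Ioc (0:ℝ) p, ‖fFun p M kr τ‖) := by
  have hu : Summable (fun k : ℕ => (2*M*p) ^ (2*k+1) / (2*k+1).factorial) := summable_odd _
  have hv : Summable (fun r : ℕ => (M*p^2) ^ r / r.factorial) :=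
    Real.summable_pow_div_factorial _
  have h2Mp : (0:ℝ) ≤ 2 * M * p := by positivity
  have hprod := hu.mul_of_nonneg hv (fun k => by positivity) (fun r => by positivity)
  refine Summable.of_nonneg_of_le
    (fun kr => integral_nonneg (fun τ => norm_nonneg _)) (fun kr => ?_) hprod
  rw [norm_integral_f hp kr]
  calc |aCoef M kr.1 * bCoef M kr.2| *
      ∫ τ in Ioc (0:ℝ) p, τ ^ (2 * (kr.1 + kr.2) + 1) / Real.sqrt (p ^ 2 - τ ^ 2)
      ≤ |aCoef M kr.1 * bCoef M kr.2| * p ^ (2 * (kr.1 + kr.2) + 1) :=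
        mul_le_mul_of_nonneg_left (integral_h_le hp _) (abs_nonneg _)
    _ = (|aCoef M kr.1| * p ^ (2*kr.1+1)) * (|bCoef M kr.2| * p ^ (2*kr.2)) := by
        rw [abs_mul, show 2*(kr.1+kr.2)+1 = (2*kr.1+1)+2*kr.2 by ring, pow_add]
        ring
    _ = (2*M*p) ^ (2*kr.1+1) / (2*kr.1+1).factorial * ((M*p^2) ^ kr.2 / kr.2.factorial) := by
        rw [abs_aCoef hM hp, abs_bCoef hM hp]

private lemma pointwise_eq {p M : ℝ} (hp : 0 < p) (hM : 0 < M) {τ : ℝ}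
    (hτ : τ ∈ Ioo (0:ℝ) p) :
    Real.exp (-M * τ ^ 2) * Real.sin (2 * M * τ) * (p ^ 2 - τ ^ 2) ^ (-(1:ℝ) / 2)
      = ∑' kr : ℕ × ℕ, fFun p M kr τ := by
  have hs : 0 < p ^ 2 - τ ^ 2 := by nlinarith [hτ.1, hτ.2]
  have hrpow : (p ^ 2 - τ ^ 2) ^ (-(1:ℝ) / 2) = (Real.sqrt (p ^ 2 - τ ^ 2))⁻¹ := by
    rw [show (-(1:ℝ)/2) = -(1/2) by norm_num, Real.rpow_neg hs.le, ← Real.sqrt_eq_rpow]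
  have hsin : Real.sin (2 * M * τ) = ∑' k, aCoef M k * τ ^ (2 * k + 1) := by
    rw [Real.sin_eq_tsum]
    refine tsum_congr fun k => ?_
    unfold aCoef
    rw [mul_pow (2*M) τ]
    ring
  have hexp : Real.exp (-M * τ ^ 2) = ∑' r, bCoef M r * τ ^ (2 * r) := by
    rw [Real.exp_eq_exp_ℝ, NormedSpace.exp_eq_tsum_div]
    refine tsum_congr fun r => ?_
    unfold bCoef
    rw [show -M * τ^2 = (-M) * τ^2 by ring, mul_pow, ← pow_mul]
    ring
  have hsa : Summable fun k => ‖aCoef M k * τ ^ (2 * k + 1)‖ := by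
    refine (summable_odd (2*M*τ)).congr fun k => ?_
    rw [Real.norm_eq_abs, abs_mul, abs_of_pos (pow_pos hτ.1 _), ← abs_aCoef hM hτ.1]
  have hsb : Summable fun r => ‖bCoef M r * τ ^ (2 * r)‖ := by
    refine (Real.summable_pow_div_factorial (M*τ^2)).congr fun r => ?_
    rw [Real.norm_eq_abs, abs_mul, abs_of_pos (pow_pos hτ.1 _), ← abs_bCoef hM hτ.1]
  rw [hexp, hsin, hrpow, mul_comm (∑' r, bCoef M r * τ ^ (2 * r))
    (∑' k, aCoef M k * τ ^ (2 * k + 1)), tsum_mul_tsum_of_summable_norm hsa hsb,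
    ← tsum_mul_right]
  refine tsum_congr fun kr => ?_
  unfold fFun
  rw [show 2*(kr.1+kr.2)+1 = (2*kr.1+1)+2*kr.2 by ring, pow_add, div_eq_mul_inv]
  ring

private lemma term_eq {p M : ℝ} (hp : 0 < p) (hM : 0 < M) (k r : ℕ) :
    Real.sqrt π / 2 * ((-1:ℝ) ^ k * (2*M*p) ^ (2*k+1) / (2*k+1).factorial *
        ((k.factorial : ℝ) / Real.Gamma ((k:ℝ) + 3/2)))
      * ((Real.Gamma ((k:ℝ)+1+r) / Real.Gamma ((k:ℝ)+1)) * (-(M*p^2)) ^ r /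
          ((Real.Gamma ((k:ℝ)+3/2+r) / Real.Gamma ((k:ℝ)+3/2)) * r.factorial))
      = ∫ τ in Ioc (0:ℝ) p, fFun p M (k,r) τ := by
  have hint : ∫ τ in Ioc (0:ℝ) p, fFun p M (k,r) τ
      = aCoef M k * bCoef M r * (p ^ (2*(k+r)+1) * (k+r).factorial * Real.sqrt π /
          (2 * Real.Gamma (((k+r:ℕ):ℝ) + 3/2))) := by
    have : fFun p M (k,r) = fun τ =>
        aCoef M k * bCoef M r * (τ ^ (2*(k+r)+1) / Real.sqrt (p^2 - τ^2)) := rfl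
    rw [this, integral_const_mul, integral_h hp]
  rw [hint]
  have e1 : Real.Gamma ((k:ℝ)+1+r) = ((k+r).factorial : ℝ) := by
    rw [show (k:ℝ)+1+(r:ℕ) = (((k+r:ℕ)):ℝ)+1 by push_cast; ring, Real.Gamma_nat_eq_factorial]
  have e2 : Real.Gamma ((k:ℝ)+1) = (k.factorial : ℝ) := Real.Gamma_nat_eq_factorial k
  have e3 : Real.Gamma ((k:ℝ)+3/2+r) = Real.Gamma (((k+r:ℕ):ℝ)+3/2) := by
    congr 1
    push_cast
    ring
  have hg1 : Real.Gamma ((k:ℝ)+3/2) ≠ 0 := (Real.Gamma_pos_of_pos (by positivity)).ne'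
  have hg2 : Real.Gamma (((k+r:ℕ):ℝ)+3/2) ≠ 0 := (Real.Gamma_pos_of_pos (by positivity)).ne'
  have f1 : ((2*k+1).factorial : ℝ) ≠ 0 := Nat.cast_ne_zero.mpr (Nat.factorial_ne_zero _)
  have f2 : (k.factorial : ℝ) ≠ 0 := Nat.cast_ne_zero.mpr (Nat.factorial_ne_zero _)
  have f3 : (r.factorial : ℝ) ≠ 0 := Nat.cast_ne_zero.mpr (Nat.factorial_ne_zero _)
  unfold aCoef bCoef
  rw [e1, e2, e3]
  field_simp
  ring

theorem branch_cut_integral_eq (p M x ρ : ℝ) (hp : 0 < p) (hM : 0 < M)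
    (hx : x = 2 * M * p) (hρ : ρ = M * p ^ 2) :
    ∫ τ in (0 : ℝ)..p,
        Real.exp (-M * τ ^ 2) * Real.sin (2 * M * τ) * (p ^ 2 - τ ^ 2) ^ (-(1 : ℝ) / 2) =
      Real.sqrt Real.pi / 2 *
        ∑' k : ℕ, (-1 : ℝ) ^ k * x ^ (2 * k + 1) / (2 * k + 1).factorial *
          ((k.factorial : ℝ) / Real.Gamma ((k : ℝ) + 3 / 2)) *
          oneFOne ((k : ℝ) + 1) ((k : ℝ) + 3 / 2) (-ρ) := by
  subst hx hρ
  have hkey := integral_tsum_of_summable_integral_norm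
      (μ := volume.restrict (Ioc (0:ℝ) p)) (F := fFun p M)
      (fun kr => integrableOn_f hp kr) (summable_norm_integral hp hM)
  have hIoc : (∫ τ in Ioc (0:ℝ) p,
        Real.exp (-M * τ ^ 2) * Real.sin (2 * M * τ) * (p ^ 2 - τ ^ 2) ^ (-(1:ℝ) / 2))
      = ∫ τ in Ioc (0:ℝ) p, ∑' kr : ℕ × ℕ, fFun p M kr τ := by
    rw [integral_Ioc_eq_integral_Ioo, integral_Ioc_eq_integral_Ioo]
    exact setIntegral_congr_fun measurableSet_Ioo fun τ hτ => pointwise_eq hp hM hτ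
  rw [intervalIntegral.integral_of_le hp.le, hIoc, ← hkey]
  have hsumI : Summable (fun kr : ℕ × ℕ => ∫ τ in Ioc (0:ℝ) p, fFun p M kr τ) := by
    refine Summable.of_abs (Summable.of_nonneg_of_le (fun kr => abs_nonneg _)
      (fun kr => ?_) (summable_norm_integral hp hM))
    exact (Real.norm_eq_abs _) ▸ norm_integral_le_integral_norm _
  rw [← tsum_mul_left]
  have hterm : ∀ k : ℕ,
      Real.sqrt π / 2 * ((-1:ℝ) ^ k * (2*M*p) ^ (2*k+1) / (2*k+1).factorial *
          ((k.factorial : ℝ) / Real.Gamma ((k:ℝ) + 3/2)) *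
          oneFOne ((k:ℝ) + 1) ((k:ℝ) + 3/2) (-(M*p^2)))
        = ∑' r : ℕ, ∫ τ in Ioc (0:ℝ) p, fFun p M (k, r) τ := by
    intro k
    unfold oneFOne
    rw [← mul_assoc, ← tsum_mul_left]
    exact tsum_congr fun r => term_eq hp hM k r
  rw [tsum_congr hterm]
  exact Summable.tsum_prod' hsumI (fun k => hsumI.prod_factor k)
end
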